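/- For every m ≥ 3 there exists a finite BCK-algebra X which is m-commutative (for all a, b ∈ X with b ≤ a the sequence z_0 = a, z_1 = b, z_k = z_{k-2}·(z_{k-2}·z_{k-1}) satisfies z_m = z_{m+1}, and m is minimal with this property) but which contains elements x, y whose BCK-sequences satisfy x_m ≠ y_m. Consequently, the variety V_m of m-commutative BCK-algebras is not characterized by the identity x_m = y_m. -/
import Mathlib


/-- A BCK-algebra structure on a set `X`: a binary operation `op` and a
constant `zero` satisfying the five BCK axioms. -/
structure BCK (X : Type*) where
  op : X → X → X
  zero : X
  ax1 : ∀ x y z : X, op (op (op x y) (op z y)) (op x z) = zero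
  ax2 : ∀ x y : X, op (op x (op x y)) y = zero
  ax3 : ∀ x : X, op x zero = x
  ax4 : ∀ x : X, op zero x = zero
  ax5 : ∀ x y : X, op x y = zero → op y x = zero → x = y

/-- The sequence `z_0 = a`, `z_1 = b`, `z_k = z_{k-2}·(z_{k-2}·z_{k-1})`
for `k ≥ 2`. -/
def zseq {X : Type*} (op : X → X → X) (a b : X) : ℕ → X
  | 0 => a
  | 1 => b
  | k + 2 => op (zseq op a b k) (op (zseq op a b k) (zseq op a b (k + 1)))

/-- The pair of BCK-sequences `(x_k, y_k)` determined by starting elements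
`x, y`:  `x_0 = x`, `y_0 = y`, `x_1 = y·(y·x)`, `y_1 = x·(x·y)`, and
`x_k = x_{k-2}·(x_{k-2}·x_{k-1})`, `y_k = y_{k-2}·(y_{k-2}·y_{k-1})` for `k ≥ 2`. -/
def bckPair {X : Type*} (op : X → X → X) (x y : X) : ℕ → X × X
  | 0 => (x, y)
  | 1 => (op y (op y x), op x (op x y))
  | k + 2 =>
      (op (bckPair op x y k).1 (op (bckPair op x y k).1 (bckPair op x y (k + 1)).1),
       op (bckPair op x y k).2 (op (bckPair op x y k).2 (bckPair op x y (k + 1)).2))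

/-! ### Auxiliary constructions -/

/-- The chain BCK-algebra on `ℕ` (to be restricted to `{0,…,n}`):
`i·j = 0` if `i ≤ j`, `i·0 = i`, and otherwise `i·j = max (i-j-1) 1`. -/
def opA : ℕ → ℕ → ℕ := fun i j =>
  if i ≤ j then 0 else if j = 0 then i else if j + 2 ≤ i then i - j - 1 else 1

lemma opA_spec (i j : ℕ) :
    (i ≤ j ∧ opA i j = 0) ∨ (j < i ∧ j = 0 ∧ opA i j = i) ∨
    (j < i ∧ 1 ≤ j ∧ j + 2 ≤ i ∧ opA i j = i - j - 1) ∨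
    (j < i ∧ 1 ≤ j ∧ i < j + 2 ∧ opA i j = 1) := by
  unfold opA; split_ifs <;> omega

lemma opA_le (i j : ℕ) : opA i j ≤ i := by have := opA_spec i j; omega

lemma ax2A (x y : ℕ) : opA (opA x (opA x y)) y = 0 := by
  have h1 := opA_spec x y
  have h2 := opA_spec x (opA x y)
  have h3 := opA_spec (opA x (opA x y)) y
  omega

set_option maxHeartbeats 1000000 in
lemma ax1A (x y z : ℕ) : opA (opA (opA x y) (opA z y)) (opA x z) = 0 := by
  have h1 := opA_spec x y
  have h2 := opA_spec z y
  have h3 := opA_spec (opA x y) (opA z y)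
  have h4 := opA_spec x z
  have h5 := opA_spec (opA (opA x y) (opA z y)) (opA x z)
  omega

/-- The finite chain `{0,…,m+1}` as `Fin (m+2)` with the operation `opA`. -/
def opF (m : ℕ) : Fin (m + 2) → Fin (m + 2) → Fin (m + 2) :=
  fun i j => ⟨opA i.val j.val, lt_of_le_of_lt (opA_le _ _) i.isLt⟩

lemma opF_val (m : ℕ) (i j : Fin (m + 2)) : (opF m i j).val = opA i.val j.val := rfl

/-- A fixed six-element BCK-algebra in which the two BCK-sequences of the
elements `1` and `2` stabilize at the distinct values `5` and `0`. -/
def opB : Fin 6 → Fin 6 → Fin 6 := fun a b =>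
  ![![0,0,0,0,0,0], ![1,0,5,5,5,4], ![2,3,0,5,3,3],
    ![3,3,0,0,3,3], ![4,0,0,0,0,4], ![5,0,0,0,0,0]] a b

/-- Product of two binary operations. -/
def pOp {α β : Type*} (o1 : α → α → α) (o2 : β → β → β) :
    α × β → α × β → α × β := fun p q => (o1 p.1 q.1, o2 p.2 q.2)

lemma zseqP {α β : Type*} (o1 : α → α → α) (o2 : β → β → β)
    (a1 b1 : α) (a2 b2 : β) :
    ∀ k, zseq (pOp o1 o2) (a1, a2) (b1, b2) k =
      (zseq o1 a1 b1 k, zseq o2 a2 b2 k)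
  | 0 => rfl
  | 1 => rfl
  | (k + 2) => by
      simp only [zseq, zseqP o1 o2 a1 b1 a2 b2 k, zseqP o1 o2 a1 b1 a2 b2 (k + 1)]
      rfl

lemma bckP {α β : Type*} (o1 : α → α → α) (o2 : β → β → β)
    (x1 y1 : α) (x2 y2 : β) :
    ∀ k, bckPair (pOp o1 o2) (x1, x2) (y1, y2) k =
      (((bckPair o1 x1 y1 k).1, (bckPair o2 x2 y2 k).1),
       ((bckPair o1 x1 y1 k).2, (bckPair o2 x2 y2 k).2))
  | 0 => rfl
  | 1 => rfl
  | (k + 2) => by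
      simp only [bckPair, bckP o1 o2 x1 y1 x2 y2 k, bckP o1 o2 x1 y1 x2 y2 (k + 1)]
      rfl

lemma zseqF (m : ℕ) (a b : Fin (m + 2)) :
    ∀ k, (zseq (opF m) a b k).val = zseq opA a.val b.val k
  | 0 => rfl
  | 1 => rfl
  | (k + 2) => by
      show (opF m _ (opF m _ _)).val = _
      simp only [zseq, opF_val, zseqF m a b k, zseqF m a b (k + 1)]

/-- Stabilization: once two consecutive terms of a `zseq` agree, all later
consecutive terms agree. -/
lemma zseq_stab {X : Type*} (op : X → X → X) (h : ∀ x, op x (op x x) = x)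
    (a b : X) (k : ℕ) (hk : zseq op a b k = zseq op a b (k + 1)) :
    ∀ l, k ≤ l → zseq op a b l = zseq op a b (l + 1) := by
  intro l hl
  induction l, hl using Nat.le_induction with
  | base => exact hk
  | succ n hn ih =>
      show zseq op a b (n + 1) = zseq op a b (n + 2)
      rw [zseq, ← ih, h]

/-- The run of the sequence for the pair `(b+1, b)` in the chain algebra. -/
lemma zrun (a b : ℕ) (ha : 2 ≤ a) (hb : b + 1 = a) :
    ∀ k, zseq opA a b (k + 1) = max (b - k) 1 ∧
         zseq opA a b (k + 2) = max (b - 1 - k) 1 := by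
  intro k
  induction k with
  | zero =>
      constructor
      · show b = max (b - 0) 1; omega
      · have e : zseq opA a b 2 = opA a (opA a b) := rfl
        rw [e]
        have h1 := opA_spec a b
        have h2 := opA_spec a (opA a b)
        omega
  | succ k ih =>
      obtain ⟨ih1, ih2⟩ := ih
      constructor
      · show zseq opA a b (k + 2) = _
        rw [ih2]; omega
      · have e : zseq opA a b (k + 3) =
            opA (zseq opA a b (k + 1)) (opA (zseq opA a b (k + 1)) (zseq opA a b (k + 2))) := rfl
        show zseq opA a b (k + 3) = _
        rw [e, ih1, ih2]
        have h1 := opA_spec (max (b - k) 1) (max (b - 1 - k) 1)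
        have h2 := opA_spec (max (b - k) 1) (opA (max (b - k) 1) (max (b - 1 - k) 1))
        omega

lemma opA_idem (x : ℕ) : opA x (opA x x) = x := by
  have h1 := opA_spec x x
  have h2 := opA_spec x (opA x x)
  omega

/-- Main computation in the chain algebra: every comparable pair has
stabilized by step `m` provided all elements are `≤ m+1`. -/
lemma mainA (m a b : ℕ) (hm : 3 ≤ m) (hb : b ≤ a) (ha : a ≤ m + 1) :
    zseq opA a b m = zseq opA a b (m + 1) := by
  by_cases hcase : b + 1 = a ∧ 1 ≤ b
  · -- the slow descending case
    obtain ⟨hb1, hb2⟩ := hcase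
    obtain ⟨k, rfl⟩ : ∃ k, m = k + 1 := ⟨m - 1, by omega⟩
    have h1 := (zrun a b (by omega) hb1 k).1
    have h2 := (zrun a b (by omega) hb1 k).2
    show zseq opA a b (k + 1) = zseq opA a b (k + 2)
    rw [h1, h2]; omega
  · -- all other cases stabilize by step 1
    have hz : zseq opA a b 1 = zseq opA a b 2 := by
      have e : zseq opA a b 2 = opA a (opA a b) := rfl
      show b = zseq opA a b 2
      rw [e]
      have h1 := opA_spec a b
      have h2 := opA_spec a (opA a b)
      omega
    exact zseq_stab opA opA_idem a b 1 hz m (by omega)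

lemma opA_eq_zero (i j : ℕ) : opA i j = 0 ↔ i ≤ j := by
  have := opA_spec i j; omega

/-! ### Facts about the six-element algebra `opB`, by `decide` -/

lemma opB_idem : ∀ x : Fin 6, opB x (opB x x) = x := by decide

lemma B_ax1 : ∀ x y z : Fin 6, opB (opB (opB x y) (opB z y)) (opB x z) = 0 := by decide
lemma B_ax2 : ∀ x y : Fin 6, opB (opB x (opB x y)) y = 0 := by decide
lemma B_ax3 : ∀ x : Fin 6, opB x 0 = x := by decide
lemma B_ax4 : ∀ x : Fin 6, opB 0 x = 0 := by decide
lemma B_ax5 : ∀ x y : Fin 6, opB x y = 0 → opB y x = 0 → x = y := by decide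

lemma B3 : ∀ a b : Fin 6, opB b a = 0 → zseq opB a b 3 = zseq opB a b 4 := by decide

lemma Bpair : ∀ k, bckPair opB 1 2 (k + 3) = (5, 0) ∧ bckPair opB 1 2 (k + 4) = (5, 0) := by
  intro k
  induction k with
  | zero => exact ⟨by decide, by decide⟩
  | succ k ih =>
      refine ⟨ih.2, ?_⟩
      have e : bckPair opB 1 2 (k + 5) =
          (opB (bckPair opB 1 2 (k + 3)).1
            (opB (bckPair opB 1 2 (k + 3)).1 (bckPair opB 1 2 (k + 4)).1),
           opB (bckPair opB 1 2 (k + 3)).2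
            (opB (bckPair opB 1 2 (k + 3)).2 (bckPair opB 1 2 (k + 4)).2)) := rfl
      rw [ih.1, ih.2] at e
      exact e.trans (by decide)

/-! ### The main theorem -/

/-- For every `m ≥ 3` there exists a finite BCK-algebra `X` which is
`m`-commutative (for all `a, b ∈ X` with `b ≤ a` in the BCK-order, the
sequence `z_0 = a`, `z_1 = b`, `z_k = z_{k-2}·(z_{k-2}·z_{k-1})` satisfies
`z_m = z_{m+1}`, and `m` is minimal with this property) but which contains
elements `x, y` whose BCK-sequences satisfy `x_m ≠ y_m`.  Consequently, the
variety `V_m` of `m`-commutative BCK-algebras is not characterized by the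
identity `x_m = y_m`. -/
theorem Vm_not_characterized_by_identity (m : ℕ) (hm : 3 ≤ m) :
    ∃ (X : Type) (_ : Fintype X) (A : BCK X),
      (∀ a b : X, A.op b a = A.zero → zseq A.op a b m = zseq A.op a b (m + 1)) ∧
      (∀ m' : ℕ, m' < m →
        ¬ (∀ a b : X, A.op b a = A.zero →
            zseq A.op a b m' = zseq A.op a b (m' + 1))) ∧
      (∃ x y : X, (bckPair A.op x y m).1 ≠ (bckPair A.op x y m).2) := by
  refine ⟨Fin (m + 2) × Fin 6, inferInstance, ?_, ?_, ?_, ?_⟩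
  · -- the BCK structure
    refine ⟨pOp (opF m) opB, (0, 0), ?_, ?_, ?_, ?_, ?_⟩
    · rintro ⟨x1, x2⟩ ⟨y1, y2⟩ ⟨z1, z2⟩
      refine Prod.ext ?_ (B_ax1 x2 y2 z2)
      apply Fin.val_injective
      show opA (opA (opA x1.val y1.val) (opA z1.val y1.val)) (opA x1.val z1.val)
        = (0 : Fin (m + 2)).val
      rw [Fin.val_zero]
      exact ax1A _ _ _
    · rintro ⟨x1, x2⟩ ⟨y1, y2⟩
      refine Prod.ext ?_ (B_ax2 x2 y2)
      apply Fin.val_injective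
      show opA (opA x1.val (opA x1.val y1.val)) y1.val = (0 : Fin (m + 2)).val
      rw [Fin.val_zero]
      exact ax2A _ _
    · rintro ⟨x1, x2⟩
      refine Prod.ext ?_ (B_ax3 x2)
      apply Fin.val_injective
      show opA x1.val (0 : Fin (m + 2)).val = x1.val
      rw [Fin.val_zero]
      have := opA_spec x1.val 0; omega
    · rintro ⟨x1, x2⟩
      refine Prod.ext ?_ (B_ax4 x2)
      apply Fin.val_injective
      show opA (0 : Fin (m + 2)).val x1.val = (0 : Fin (m + 2)).val
      rw [Fin.val_zero]
      have := opA_spec 0 x1.val; omega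
    · rintro ⟨x1, x2⟩ ⟨y1, y2⟩ hxy hyx
      have h1 : opF m x1 y1 = 0 := congrArg Prod.fst hxy
      have h2 : opB x2 y2 = 0 := congrArg Prod.snd hxy
      have h3 : opF m y1 x1 = 0 := congrArg Prod.fst hyx
      have h4 : opB y2 x2 = 0 := congrArg Prod.snd hyx
      refine Prod.ext ?_ (B_ax5 x2 y2 h2 h4)
      show x1 = y1
      apply Fin.val_injective
      have e1 : opA x1.val y1.val = 0 := by
        have := congrArg Fin.val h1; rwa [opF_val, Fin.val_zero] at this
      have e2 : opA y1.val x1.val = 0 := by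
        have := congrArg Fin.val h3; rwa [opF_val, Fin.val_zero] at this
      rw [opA_eq_zero] at e1 e2
      omega
  · -- m-commutativity
    rintro ⟨a1, a2⟩ ⟨b1, b2⟩ hba
    have h1 : opF m b1 a1 = 0 := congrArg Prod.fst hba
    have h2 : opB b2 a2 = 0 := congrArg Prod.snd hba
    rw [zseqP, zseqP]
    refine Prod.ext ?_ ?_
    · apply Fin.val_injective
      rw [zseqF, zseqF]
      have e1 : opA b1.val a1.val = 0 := by
        have := congrArg Fin.val h1; rwa [opF_val, Fin.val_zero] at this
      rw [opA_eq_zero] at e1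
      exact mainA m a1.val b1.val hm e1 (by omega)
    · exact zseq_stab opB opB_idem a2 b2 3 (B3 a2 b2 h2) m (by omega)
  · -- minimality
    intro m' hm' hall
    have hA : opA m (m + 1) = 0 := (opA_eq_zero m (m + 1)).mpr (by omega)
    have hz : pOp (opF m) opB ((⟨m, by omega⟩ : Fin (m + 2)), (0 : Fin 6))
        ((⟨m + 1, by omega⟩ : Fin (m + 2)), (0 : Fin 6)) = ((0 : Fin (m + 2)), (0 : Fin 6)) := by
      refine Prod.ext ?_ (B_ax4 0)
      apply Fin.val_injective
      show opA m (m + 1) = (0 : Fin (m + 2)).val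
      rw [Fin.val_zero]; exact hA
    have h := hall ((⟨m + 1, by omega⟩ : Fin (m + 2)), (0 : Fin 6))
      ((⟨m, by omega⟩ : Fin (m + 2)), (0 : Fin 6)) hz
    rw [zseqP, zseqP, Prod.mk.injEq] at h
    have h1 := congrArg Fin.val h.1
    rw [zseqF, zseqF] at h1
    -- h1 is an equality of ℕ-sequences for the pair (m+1, m)
    rcases Nat.eq_zero_or_pos m' with h0 | hpos
    · subst h0
      have e0 : zseq opA (m + 1 : ℕ) (m : ℕ) 0 = m + 1 := rfl
      have e1 : zseq opA (m + 1 : ℕ) (m : ℕ) 1 = m := rfl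
      simp only [e0, e1] at h1
      omega
    · obtain ⟨k, rfl⟩ : ∃ k, m' = k + 1 := ⟨m' - 1, by omega⟩
      have g1 := (zrun (m + 1) m (by omega) rfl k).1
      have g2 := (zrun (m + 1) m (by omega) rfl k).2
      have h1' : zseq opA (m + 1 : ℕ) (m : ℕ) (k + 1) =
          zseq opA (m + 1 : ℕ) (m : ℕ) (k + 2) := h1
      rw [g1, g2] at h1'
      omega
  · -- the witness pair for x_m ≠ y_m
    refine ⟨((0 : Fin (m + 2)), (1 : Fin 6)), ((0 : Fin (m + 2)), (2 : Fin 6)), ?_⟩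
    obtain ⟨k, rfl⟩ : ∃ k, m = k + 3 := ⟨m - 3, by omega⟩
    have hb := (Bpair k).1
    rw [bckP, hb]
    intro hcontra
    have : (5 : Fin 6) = 0 := by
      have := congrArg Prod.snd hcontra
      simp at this
    exact absurd this (by decide)
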